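/- arXiv:0706.3405 — 2 statements merged into one kernel-verified Lean document; each statement's English description precedes it below -/
import Mathlib

section
/- For any n ≥ 1 and d ≥ 2, f(n,d) ≤ n + log₂(n) · f(n,d−1), where f(n,d) is the supremum of τ(𝓑) over finite families of axis-parallel boxes in ℝ^d with ν(𝓑) ≤ n. -/
/-- A finite point set `S` pierces the family `F` if every member contains a point of `S`. -/
def Piercing {α : Type*} (S : Finset α) (F : Finset (Set α)) : Prop :=
  ∀ B ∈ F, ∃ p ∈ S, p ∈ B

/-- The piercing (transversal) number τ of a finite family of sets. -/
noncomputable def tau {α : Type*} (F : Finset (Set α)) : ℕ :=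
  sInf {n | ∃ S : Finset α, S.card = n ∧ Piercing S F}

/-- The independence number ν : the maximal number of pairwise disjoint members. -/
noncomputable def nu {α : Type*} (F : Finset (Set α)) : ℕ :=
  sSup {n | ∃ G ⊆ F, G.card = n ∧ (G : Set (Set α)).PairwiseDisjoint id}

/-- An axis-parallel box in ℝ^d : a product of d nonempty closed intervals. -/
def IsBox (d : ℕ) (B : Set (Fin d → ℝ)) : Prop :=
  ∃ l u : Fin d → ℝ, l ≤ u ∧ B = Set.Icc l u

/-- `f n d` : the supremum of τ over finite families of boxes in ℝ^d with ν ≤ n. -/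
noncomputable def fBox (n d : ℕ) : ℕ :=
  sSup {t | ∃ F : Finset (Set (Fin d → ℝ)),
    (∀ B ∈ F, IsBox d B) ∧ nu F ≤ n ∧ tau F = t}


open scoped Classical

variable {α : Type*} {F G : Finset (Set α)} {S : Finset α} {m : ℕ}

lemma tau_le_card (hS : Piercing S F) : tau F ≤ S.card :=
  Nat.sInf_le ⟨S, rfl, hS⟩

lemma exists_tau_piercing (h : ∀ B ∈ F, (B : Set α).Nonempty) :
    ∃ S : Finset α, S.card = tau F ∧ Piercing S F := by
  classical
  have hne : {n | ∃ S : Finset α, S.card = n ∧ Piercing S F}.Nonempty := by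
    refine ⟨_, F.attach.image (fun B => (h B.1 B.2).some), rfl, ?_⟩
    intro B hB
    exact ⟨(h B hB).some, Finset.mem_image.2 ⟨⟨B, hB⟩, Finset.mem_attach _ _, rfl⟩,
      (h B hB).some_mem⟩
  exact Nat.sInf_mem hne

lemma nu_le (h : ∀ G ⊆ F, (G : Set (Set α)).PairwiseDisjoint id → G.card ≤ m) :
    nu F ≤ m := by
  refine csSup_le ⟨0, ∅, Finset.empty_subset _, by simp⟩ ?_
  rintro t ⟨G, hG, rfl, hd⟩
  exact h G hG hd

lemma card_le_nu (hG : G ⊆ F) (hd : (G : Set (Set α)).PairwiseDisjoint id) :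
    G.card ≤ nu F := by
  refine le_csSup ⟨F.card, ?_⟩ ⟨G, hG, rfl, hd⟩
  rintro t ⟨G', hG', rfl, -⟩
  exact Finset.card_le_card hG'

lemma nu_mono (h : G ⊆ F) : nu G ≤ nu F :=
  nu_le fun G' hG' hd => card_le_nu (hG'.trans h) hd

lemma tau_union_le (h1 : ∀ B ∈ F, (B : Set α).Nonempty)
    (h2 : ∀ B ∈ G, (B : Set α).Nonempty) :
    tau (F ∪ G) ≤ tau F + tau G := by
  classical
  obtain ⟨S1, hc1, hp1⟩ := exists_tau_piercing h1
  obtain ⟨S2, hc2, hp2⟩ := exists_tau_piercing h2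
  calc tau (F ∪ G) ≤ (S1 ∪ S2).card := by
        refine tau_le_card ?_
        intro B hB
        rcases Finset.mem_union.1 hB with hB | hB
        · obtain ⟨p, hp, hpB⟩ := hp1 B hB
          exact ⟨p, Finset.mem_union_left _ hp, hpB⟩
        · obtain ⟨p, hp, hpB⟩ := hp2 B hB
          exact ⟨p, Finset.mem_union_right _ hp, hpB⟩
    _ ≤ S1.card + S2.card := Finset.card_union_le _ _
    _ = tau F + tau G := by rw [hc1, hc2]

/-- greedy piercing of intervals -/
lemma interval_greedy (m : ℕ) :
    ∀ (I : Finset (Set ℝ)), (∀ J ∈ I, ∃ a b : ℝ, a ≤ b ∧ J = Set.Icc a b) →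
    nu I ≤ m → ∃ C : Finset ℝ, C.card ≤ m ∧ Piercing C I := by
  induction m with
  | zero =>
    intro I hI hnu
    refine ⟨∅, le_rfl, ?_⟩
    intro J hJ
    exfalso
    have : ({J} : Finset (Set ℝ)).card ≤ nu I := by
      refine card_le_nu (by simpa using hJ) ?_
      simp [Set.PairwiseDisjoint]
    simp at this
    omega
  | succ m ih =>
    intro I hI hnu
    rcases I.eq_empty_or_nonempty with rfl | hne
    · exact ⟨∅, by simp, by simp [Piercing]⟩
    obtain ⟨J0, hJ0, hmin⟩ := I.exists_min_image (fun J => sSup J) hne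
    obtain ⟨a0, b0, hab0, hJ0eq⟩ := hI J0 hJ0
    have hsup0 : sSup J0 = b0 := by rw [hJ0eq, csSup_Icc hab0]
    set c := sSup J0 with hc
    have hcJ0 : c ∈ J0 := by rw [hJ0eq, hsup0]; exact Set.right_mem_Icc.2 hab0
    set I' := I.filter (fun J => c ∉ J) with hI'
    have hI'sub : I' ⊆ I := Finset.filter_subset _ _
    have hdisj : ∀ J ∈ I', Disjoint J0 J := by
      intro J hJ
      obtain ⟨a, b, hab, hJeq⟩ := hI J (hI'sub hJ)
      have hcb : c ≤ b := by
        have := hmin J (hI'sub hJ)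
        rwa [hJeq, csSup_Icc hab] at this
      have hcnot : c ∉ J := (Finset.mem_filter.1 hJ).2
      have hca : c < a := by
        rw [hJeq, Set.mem_Icc] at hcnot
        push_neg at hcnot
        by_contra hle
        push_neg at hle
        exact absurd (hcnot hle) (not_lt.2 hcb)
      rw [Set.disjoint_left]
      intro x hxJ0 hxJ
      have h1 : x ≤ c := by rw [hJ0eq] at hxJ0; rw [hsup0]; exact (Set.mem_Icc.1 hxJ0).2
      have h2 : a ≤ x := by rw [hJeq] at hxJ; exact (Set.mem_Icc.1 hxJ).1
      linarith
    have hnu' : nu I' ≤ m := by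
      refine nu_le ?_
      intro G hG hGd
      have hJ0G : J0 ∉ G := fun h => (Finset.mem_filter.1 (hG h)).2 hcJ0
      have : (insert J0 G).card ≤ nu I := by
        refine card_le_nu ?_ ?_
        · intro B hB
          rcases Finset.mem_insert.1 hB with rfl | hB
          · exact hJ0
          · exact hI'sub (hG hB)
        · rw [Finset.coe_insert]
          refine Set.PairwiseDisjoint.insert hGd ?_
          intro J hJG _
          exact hdisj J (hG hJG)
      rw [Finset.card_insert_of_notMem hJ0G] at this
      omega
    obtain ⟨C', hC'c, hC'p⟩ := ih I' (fun J hJ => hI J (hI'sub hJ)) hnu'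
    refine ⟨insert c C', ?_, ?_⟩
    · calc (insert c C').card ≤ C'.card + 1 := Finset.card_insert_le _ _
        _ ≤ m + 1 := by omega
    · intro J hJ
      by_cases hcJ : c ∈ J
      · exact ⟨c, Finset.mem_insert_self _ _, hcJ⟩
      · obtain ⟨p, hp, hpJ⟩ := hC'p J (Finset.mem_filter.2 ⟨hJ, hcJ⟩)
        exact ⟨p, Finset.mem_insert_of_mem hp, hpJ⟩

section Slice

lemma image_eval_Icc {d : ℕ} {l u : Fin d → ℝ} (h : l ≤ u) (j : Fin d) :
    (fun x => x j) '' Set.Icc l u = Set.Icc (l j) (u j) := by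
  ext t
  constructor
  · rintro ⟨x, hx, rfl⟩
    exact ⟨hx.1 j, hx.2 j⟩
  · intro ht
    refine ⟨Function.update l j t, ⟨?_, ?_⟩, Function.update_self _ _ _⟩
    · intro i
      rcases eq_or_ne i j with rfl | hij
      · simp [ht.1]
      · simp [Function.update_of_ne hij]
    · intro i
      rcases eq_or_ne i j with rfl | hij
      · simp [ht.2]
      · simp [Function.update_of_ne hij, h i]

variable {e : ℕ}

noncomputable def bslice (c : ℝ) (B : Set (Fin (e+1) → ℝ)) : Set (Fin e → ℝ) :=
  (fun p => Fin.snoc p c) ⁻¹' B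

lemma snoc_mem_Icc {l u : Fin (e+1) → ℝ} {p : Fin e → ℝ} {c : ℝ} :
    Fin.snoc p c ∈ Set.Icc l u ↔
      p ∈ Set.Icc (Fin.init l) (Fin.init u) ∧
        l (Fin.last e) ≤ c ∧ c ≤ u (Fin.last e) := by
  simp only [Set.mem_Icc, Pi.le_def]
  constructor
  · intro ⟨h1, h2⟩
    refine ⟨⟨fun i => ?_, fun i => ?_⟩, ?_, ?_⟩
    · have := h1 i.castSucc
      simpa [Fin.init, Fin.snoc_castSucc] using this
    · have := h2 i.castSucc
      simpa [Fin.init, Fin.snoc_castSucc] using this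
    · have := h1 (Fin.last e); simpa [Fin.snoc_last] using this
    · have := h2 (Fin.last e); simpa [Fin.snoc_last] using this
  · intro ⟨⟨h1, h2⟩, h3, h4⟩
    refine ⟨fun i => ?_, fun i => ?_⟩
    · induction i using Fin.lastCases with
      | last => simpa [Fin.snoc_last] using h3
      | cast i => simpa [Fin.snoc_castSucc, Fin.init] using h1 i
    · induction i using Fin.lastCases with
      | last => simpa [Fin.snoc_last] using h4
      | cast i => simpa [Fin.snoc_castSucc, Fin.init] using h2 i

lemma init_mem_Icc {l u x : Fin (e+1) → ℝ} (hx : x ∈ Set.Icc l u) :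
    Fin.init x ∈ Set.Icc (Fin.init l) (Fin.init u) := by
  simp only [Set.mem_Icc, Pi.le_def] at *
  exact ⟨fun i => hx.1 i.castSucc, fun i => hx.2 i.castSucc⟩

lemma bslice_box {l u : Fin (e+1) → ℝ} (h : l ≤ u) (c : ℝ)
    (h1 : l (Fin.last e) ≤ c) (h2 : c ≤ u (Fin.last e)) :
    bslice c (Set.Icc l u) = Set.Icc (Fin.init l) (Fin.init u) := by
  ext p
  simp only [bslice, Set.mem_preimage, snoc_mem_Icc]
  tauto

lemma init_le_init {l u : Fin (e+1) → ℝ} (h : l ≤ u) : Fin.init l ≤ Fin.init u :=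
  fun i => h i.castSucc

/-- Crossing predicate bundled family hypothesis. -/
def Crossing (c : ℝ) (Fc : Finset (Set (Fin (e+1) → ℝ))) : Prop :=
  ∀ B ∈ Fc, ∃ l u : Fin (e+1) → ℝ, l ≤ u ∧ B = Set.Icc l u ∧
    l (Fin.last e) ≤ c ∧ c ≤ u (Fin.last e)

lemma bslice_isBox {c : ℝ} {Fc : Finset (Set (Fin (e+1) → ℝ))} (hb : Crossing c Fc) :
    ∀ A ∈ Fc.image (bslice c), IsBox e A := by
  intro A hA
  obtain ⟨B, hB, rfl⟩ := Finset.mem_image.1 hA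
  obtain ⟨l, u, hlu, rfl, hc1, hc2⟩ := hb B hB
  exact ⟨Fin.init l, Fin.init u, init_le_init hlu, bslice_box hlu c hc1 hc2⟩

lemma tau_le_tau_bslice {c : ℝ} {Fc : Finset (Set (Fin (e+1) → ℝ))} (hb : Crossing c Fc) :
    tau Fc ≤ tau (Fc.image (bslice c)) := by
  have hne : ∀ A ∈ Fc.image (bslice c), (A : Set (Fin e → ℝ)).Nonempty := by
    intro A hA
    obtain ⟨la, ua, hla, rfl⟩ := bslice_isBox hb A hA
    exact Set.nonempty_Icc.2 hla
  obtain ⟨S', hS'c, hS'p⟩ := exists_tau_piercing hne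
  calc tau Fc ≤ (S'.image (fun p => Fin.snoc p c : (Fin e → ℝ) → Fin (e+1) → ℝ)).card := by
        refine tau_le_card ?_
        intro B hB
        obtain ⟨p, hp, hpA⟩ := hS'p (bslice c B) (Finset.mem_image_of_mem _ hB)
        exact ⟨Fin.snoc p c, Finset.mem_image_of_mem _ hp, hpA⟩
    _ ≤ S'.card := Finset.card_image_le
    _ = tau (Fc.image (bslice c)) := hS'c

lemma nu_bslice_le {c : ℝ} {Fc : Finset (Set (Fin (e+1) → ℝ))} (hb : Crossing c Fc) :
    nu (Fc.image (bslice c)) ≤ nu Fc := by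
  refine nu_le ?_
  intro G' hG' hpd
  have hex : ∀ A ∈ G', ∃ B ∈ Fc, bslice c B = A := by
    intro A hA
    obtain ⟨B, hB, hBA⟩ := Finset.mem_image.1 (hG' hA)
    exact ⟨B, hB, hBA⟩
  set g : Set (Fin e → ℝ) → Set (Fin (e+1) → ℝ) := fun A =>
    if h : ∃ B ∈ Fc, bslice c B = A then h.choose else ∅ with hg
  have hgspec : ∀ A ∈ G', g A ∈ Fc ∧ bslice c (g A) = A := by
    intro A hA
    have h := hex A hA
    rw [hg]
    simp only [dif_pos h]
    exact ⟨h.choose_spec.1, h.choose_spec.2⟩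
  have hinj : Set.InjOn g G' := by
    intro A1 h1 A2 h2 heq
    rw [← (hgspec A1 h1).2, ← (hgspec A2 h2).2, heq]
  calc G'.card = (G'.image g).card := (Finset.card_image_of_injOn hinj).symm
    _ ≤ nu Fc := by
      refine card_le_nu ?_ ?_
      · intro B hB
        obtain ⟨A, hA, rfl⟩ := Finset.mem_image.1 hB
        exact (hgspec A hA).1
      · intro B1 h1 B2 h2 hne12
        simp only [Finset.coe_image, Set.mem_image, Finset.mem_coe] at h1 h2
        obtain ⟨A1, hA1, rfl⟩ := h1
        obtain ⟨A2, hA2, rfl⟩ := h2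
        have hAne : A1 ≠ A2 := fun h => hne12 (by rw [h])
        have hdisj := hpd hA1 hA2 hAne
        simp only [Function.onFun, id] at hdisj ⊢
        rw [Set.disjoint_left]
        intro x hx1 hx2
        obtain ⟨l1, u1, hlu1, hB1eq, hc11, hc12⟩ := hb _ (hgspec A1 hA1).1
        have hmem : Fin.init x ∈ bslice c (g A1) := by
          rw [hB1eq] at hx1 ⊢
          simp only [bslice, Set.mem_preimage, snoc_mem_Icc]
          exact ⟨init_mem_Icc hx1, hc11, hc12⟩
        obtain ⟨l2, u2, hlu2, hB2eq, hc21, hc22⟩ := hb _ (hgspec A2 hA2).1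
        have hmem2 : Fin.init x ∈ bslice c (g A2) := by
          rw [hB2eq] at hx2 ⊢
          simp only [bslice, Set.mem_preimage, snoc_mem_Icc]
          exact ⟨init_mem_Icc hx2, hc21, hc22⟩
        rw [(hgspec A1 hA1).2] at hmem
        rw [(hgspec A2 hA2).2] at hmem2
        exact (Set.disjoint_left.1 hdisj hmem) hmem2

end Slice

section Crude

lemma tau_empty {α : Type*} : tau (∅ : Finset (Set α)) = 0 := by
  have : (0 : ℕ) ∈ {n | ∃ S : Finset α, S.card = n ∧ Piercing S (∅ : Finset (Set α))} :=
    ⟨∅, rfl, by simp [Piercing]⟩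
  exact Nat.eq_zero_of_le_zero (Nat.sInf_le this)

lemma nu_empty {α : Type*} : nu (∅ : Finset (Set α)) = 0 := by
  refine Nat.eq_zero_of_le_zero (nu_le ?_)
  intro G hG _
  simp [Finset.subset_empty.1 hG]

lemma nu_image_le {α β : Type*} (f : Set α → Set β) (F : Finset (Set α))
    (h : ∀ B1 ∈ F, ∀ B2 ∈ F, Disjoint (f B1) (f B2) → Disjoint B1 B2) :
    nu (F.image f) ≤ nu F := by
  refine nu_le ?_
  intro G' hG' hpd
  have hex : ∀ A ∈ G', ∃ B ∈ F, f B = A := by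
    intro A hA
    obtain ⟨B, hB, hBA⟩ := Finset.mem_image.1 (hG' hA)
    exact ⟨B, hB, hBA⟩
  set g : Set β → Set α := fun A => if h : ∃ B ∈ F, f B = A then h.choose else ∅ with hg
  have hgspec : ∀ A ∈ G', g A ∈ F ∧ f (g A) = A := by
    intro A hA
    have hh := hex A hA
    rw [hg]
    simp only [dif_pos hh]
    exact ⟨hh.choose_spec.1, hh.choose_spec.2⟩
  have hinj : Set.InjOn g G' := by
    intro A1 h1 A2 h2 heq
    rw [← (hgspec A1 h1).2, ← (hgspec A2 h2).2, heq]
  calc G'.card = (G'.image g).card := (Finset.card_image_of_injOn hinj).symm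
    _ ≤ nu F := by
      refine card_le_nu ?_ ?_
      · intro B hB
        obtain ⟨A, hA, rfl⟩ := Finset.mem_image.1 hB
        exact (hgspec A hA).1
      · intro B1 h1 B2 h2 hne12
        simp only [Finset.coe_image, Set.mem_image, Finset.mem_coe] at h1 h2
        obtain ⟨A1, hA1, rfl⟩ := h1
        obtain ⟨A2, hA2, rfl⟩ := h2
        have hAne : A1 ≠ A2 := fun hk => hne12 (by rw [hk])
        have hdisj := hpd hA1 hA2 hAne
        simp only [Function.onFun, id] at hdisj ⊢
        refine h _ (hgspec A1 hA1).1 _ (hgspec A2 hA2).1 ?_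
        rw [(hgspec A1 hA1).2, (hgspec A2 hA2).2]
        exact hdisj

noncomputable def projLast (e : ℕ) (B : Set (Fin (e+1) → ℝ)) : Set ℝ :=
  (fun x => x (Fin.last e)) '' B

lemma crude_bound : ∀ (d n : ℕ) (F : Finset (Set (Fin d → ℝ))),
    (∀ B ∈ F, IsBox d B) → nu F ≤ n → tau F ≤ n ^ d := by
  intro d
  induction d with
  | zero =>
    intro n F hbox _
    have : tau F ≤ ({(fun _ => 0 : Fin 0 → ℝ)} : Finset (Fin 0 → ℝ)).card := by
      refine tau_le_card ?_
      intro B hB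
      obtain ⟨l, u, hlu, rfl⟩ := hbox B hB
      refine ⟨_, Finset.mem_singleton_self _, ?_⟩
      constructor <;> intro i <;> exact absurd i.2 (by omega)
    simpa using this
  | succ e ih =>
    intro n F hbox hnu
    set Iproj := F.image (projLast e) with hIproj
    have hIint : ∀ J ∈ Iproj, ∃ a b : ℝ, a ≤ b ∧ J = Set.Icc a b := by
      intro J hJ
      obtain ⟨B, hB, rfl⟩ := Finset.mem_image.1 hJ
      obtain ⟨l, u, hlu, rfl⟩ := hbox B hB
      exact ⟨l (Fin.last e), u (Fin.last e), hlu (Fin.last e),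
        image_eval_Icc hlu (Fin.last e)⟩
    have hInu : nu Iproj ≤ n := by
      refine le_trans (nu_image_le _ _ ?_) hnu
      intro B1 _ B2 _ hdisj
      rw [Set.disjoint_left] at hdisj ⊢
      intro x hx1 hx2
      exact hdisj ⟨x, hx1, rfl⟩ ⟨x, hx2, rfl⟩
    obtain ⟨C, hCcard, hCp⟩ := interval_greedy n Iproj hIint hInu
    have hslice : ∀ c : ℝ, ∃ S : Finset (Fin (e+1) → ℝ),
        Piercing S (F.filter (fun B => c ∈ projLast e B)) ∧ S.card ≤ n ^ e := by
      intro c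
      set Fc := F.filter (fun B => c ∈ projLast e B) with hFc
      have hcross : Crossing c Fc := by
        intro B hB
        obtain ⟨hBF, hcB⟩ := Finset.mem_filter.1 hB
        obtain ⟨l, u, hlu, rfl⟩ := hbox B hBF
        rw [projLast, image_eval_Icc hlu] at hcB
        exact ⟨l, u, hlu, rfl, hcB.1, hcB.2⟩
      have h1 : tau Fc ≤ tau (Fc.image (bslice c)) := tau_le_tau_bslice hcross
      have h2 : tau (Fc.image (bslice c)) ≤ n ^ e := by
        refine ih n _ (bslice_isBox hcross) ?_
        exact le_trans (nu_bslice_le hcross) (le_trans (nu_mono (Finset.filter_subset _ _)) hnu)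
      have h3 : ∀ B ∈ Fc, (B : Set (Fin (e+1) → ℝ)).Nonempty := by
        intro B hB
        obtain ⟨l, u, hlu, hBeq, _, _⟩ := hcross B hB
        rw [hBeq]; exact Set.nonempty_Icc.2 hlu
      obtain ⟨S, hSc, hSp⟩ := exists_tau_piercing h3
      exact ⟨S, hSp, by omega⟩
    choose Sf hSf1 hSf2 using hslice
    calc tau F ≤ (C.biUnion Sf).card := by
          refine tau_le_card ?_
          intro B hB
          obtain ⟨c, hc, hcB⟩ := hCp (projLast e B) (Finset.mem_image_of_mem _ hB)
          obtain ⟨p, hp, hpB⟩ := hSf1 c B (Finset.mem_filter.2 ⟨hB, hcB⟩)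
          exact ⟨p, Finset.mem_biUnion.2 ⟨c, hc, hp⟩, hpB⟩
      _ ≤ ∑ c ∈ C, (Sf c).card := Finset.card_biUnion_le
      _ ≤ C.card * n ^ e := by
          refine le_trans (Finset.sum_le_card_nsmul _ _ (n ^ e) (fun c _ => hSf2 c)) ?_
          simp [smul_eq_mul]
      _ ≤ n * n ^ e := Nat.mul_le_mul_right _ hCcard
      _ = n ^ (e + 1) := by ring

lemma fBoxSet_bddAbove (n d : ℕ) :
    BddAbove {t | ∃ F : Finset (Set (Fin d → ℝ)),
      (∀ B ∈ F, IsBox d B) ∧ nu F ≤ n ∧ tau F = t} := by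
  refine ⟨n ^ d, ?_⟩
  rintro t ⟨F, h1, h2, rfl⟩
  exact crude_bound d n F h1 h2

lemma fBoxSet_nonempty (n d : ℕ) :
    {t | ∃ F : Finset (Set (Fin d → ℝ)),
      (∀ B ∈ F, IsBox d B) ∧ nu F ≤ n ∧ tau F = t}.Nonempty :=
  ⟨0, ∅, by simp, by simp [nu_empty], tau_empty⟩

lemma tau_le_fBox {n d : ℕ} {F : Finset (Set (Fin d → ℝ))}
    (h1 : ∀ B ∈ F, IsBox d B) (h2 : nu F ≤ n) : tau F ≤ fBox n d :=
  le_csSup (fBoxSet_bddAbove n d) ⟨F, h1, h2, rfl⟩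

lemma fBox_mono {n m : ℕ} (d : ℕ) (h : n ≤ m) : fBox n d ≤ fBox m d := by
  refine csSup_le_csSup (fBoxSet_bddAbove m d) (fBoxSet_nonempty n d) ?_
  rintro t ⟨F, h1, h2, rfl⟩
  exact ⟨F, h1, h2.trans h, rfl⟩

lemma exists_fBox_attained (n d : ℕ) :
    ∃ F : Finset (Set (Fin d → ℝ)),
      (∀ B ∈ F, IsBox d B) ∧ nu F ≤ n ∧ tau F = fBox n d :=
  Nat.sSup_mem (fBoxSet_nonempty n d) (fBoxSet_bddAbove n d)

end Crude

section Helly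

lemma helly_boxes {d : ℕ} {F : Finset (Set (Fin d → ℝ))}
    (hbox : ∀ B ∈ F, IsBox d B) (hnu : nu F ≤ 1) : tau F ≤ 1 := by
  rcases F.eq_empty_or_nonempty with rfl | hne
  · simp [tau_empty]
  have hint : ∀ B1 ∈ F, ∀ B2 ∈ F, (B1 ∩ B2).Nonempty := by
    intro B1 h1 B2 h2
    rcases eq_or_ne B1 B2 with rfl | hneq
    · obtain ⟨l, u, hlu, rfl⟩ := hbox B1 h1
      simpa using Set.nonempty_Icc.2 hlu
    · by_contra hdis
      rw [Set.not_nonempty_iff_eq_empty] at hdis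
      have hd : Disjoint B1 B2 := Set.disjoint_iff_inter_eq_empty.2 hdis
      have : ({B1, B2} : Finset (Set (Fin d → ℝ))).card ≤ nu F := by
        refine card_le_nu ?_ ?_
        · intro B hB
          rcases Finset.mem_insert.1 hB with rfl | hB
          · exact h1
          · rw [Finset.mem_singleton.1 hB]; exact h2
        · rw [Finset.coe_insert, Finset.coe_singleton]
          intro x hx y hy hxy
          simp only [Set.mem_insert_iff, Set.mem_singleton_iff] at hx hy
          rcases hx with rfl | rfl <;> rcases hy with rfl | rfl
          · exact absurd rfl hxy
          · simpa [Function.onFun] using hd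
          · simpa [Function.onFun] using hd.symm
          · exact absurd rfl hxy
      rw [Finset.card_pair hneq] at this
      omega
  choose lf uf hle heq using hbox
  have hat : F.attach.Nonempty := Finset.attach_nonempty_iff.2 hne
  set p : Fin d → ℝ := fun j => F.attach.sup' hat (fun B => lf B.1 B.2 j) with hp
  have hmem : ∀ B0 (hB0 : B0 ∈ F), p ∈ B0 := by
    intro B0 hB0
    rw [heq B0 hB0, Set.mem_Icc]
    constructor
    · intro j
      exact Finset.le_sup' (fun B : {x // x ∈ F} => lf B.1 B.2 j) (F.mem_attach ⟨B0, hB0⟩)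
    · intro j
      refine Finset.sup'_le _ _ ?_
      intro B _
      obtain ⟨x, hx1, hx2⟩ := hint B.1 B.2 B0 hB0
      rw [heq B.1 B.2] at hx1
      rw [heq B0 hB0] at hx2
      exact le_trans (hx1.1 j) (hx2.2 j)
  have : tau F ≤ ({p} : Finset (Fin d → ℝ)).card := by
    refine tau_le_card ?_
    intro B hB
    exact ⟨p, Finset.mem_singleton_self _, hmem B hB⟩
  simpa using this

end Helly

section Superadd

lemma exists_coord_upper {d : ℕ} (j : Fin d) (F : Finset (Set (Fin d → ℝ)))
    (hbox : ∀ B ∈ F, IsBox d B) : ∃ M : ℝ, ∀ B ∈ F, ∀ x ∈ B, x j ≤ M := by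
  classical
  induction F using Finset.induction_on with
  | empty => exact ⟨0, by simp⟩
  | @insert B F hBF ih =>
    obtain ⟨M, hM⟩ := ih (fun B' hB' => hbox B' (Finset.mem_insert_of_mem hB'))
    obtain ⟨l, u, hlu, hBeq⟩ := hbox B (Finset.mem_insert_self _ _)
    refine ⟨max M (u j), ?_⟩
    intro B' hB' x hx
    rcases Finset.mem_insert.1 hB' with rfl | hB'
    · rw [hBeq] at hx
      exact le_max_of_le_right (hx.2 j)
    · exact le_max_of_le_left (hM B' hB' x hx)

lemma exists_coord_lower {d : ℕ} (j : Fin d) (F : Finset (Set (Fin d → ℝ)))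
    (hbox : ∀ B ∈ F, IsBox d B) : ∃ M : ℝ, ∀ B ∈ F, ∀ x ∈ B, M ≤ x j := by
  classical
  induction F using Finset.induction_on with
  | empty => exact ⟨0, by simp⟩
  | @insert B F hBF ih =>
    obtain ⟨M, hM⟩ := ih (fun B' hB' => hbox B' (Finset.mem_insert_of_mem hB'))
    obtain ⟨l, u, hlu, hBeq⟩ := hbox B (Finset.mem_insert_self _ _)
    refine ⟨min M (l j), ?_⟩
    intro B' hB' x hx
    rcases Finset.mem_insert.1 hB' with rfl | hB'
    · rw [hBeq] at hx
      exact min_le_of_right_le (hx.1 j)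
    · exact min_le_of_left_le (hM B' hB' x hx)

lemma fBox_superadd (a b e : ℕ) :
    fBox a (e+1) + fBox b (e+1) ≤ fBox (a+b) (e+1) := by
  obtain ⟨F1, hb1, hn1, ht1⟩ := exists_fBox_attained a (e+1)
  obtain ⟨F2, hb2, hn2, ht2⟩ := exists_fBox_attained b (e+1)
  obtain ⟨M1, hM1⟩ := exists_coord_upper 0 F1 hb1
  obtain ⟨m2, hm2⟩ := exists_coord_lower 0 F2 hb2
  set v : Fin (e+1) → ℝ := fun i => if i = 0 then M1 - m2 + 1 else 0 with hv
  have hv0 : v 0 = M1 - m2 + 1 := by simp [hv]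
  set T : (Fin (e+1) → ℝ) → (Fin (e+1) → ℝ) := fun x => x + v with hT
  set F2' := F2.image (Set.image T) with hF2'
  have hb2' : ∀ B ∈ F2', IsBox (e+1) B := by
    intro B hB
    obtain ⟨B0, hB0, rfl⟩ := Finset.mem_image.1 hB
    obtain ⟨l, u, hlu, rfl⟩ := hb2 B0 hB0
    exact ⟨l + v, u + v, fun i => by simpa using hlu i, Set.image_add_const_Icc v l u⟩
  have hsep : ∀ B ∈ F2', ∀ y ∈ B, M1 + 1 ≤ y 0 := by
    intro B hB y hy
    obtain ⟨B0, hB0, rfl⟩ := Finset.mem_image.1 hB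
    obtain ⟨x, hx, rfl⟩ := hy
    have := hm2 B0 hB0 x hx
    simp only [hT, Pi.add_apply, hv0]
    linarith
  have hn2' : nu F2' ≤ b := by
    refine le_trans (nu_image_le _ _ ?_) hn2
    intro B1 _ B2 _ hdisj
    rw [Set.disjoint_left] at hdisj ⊢
    intro x hx1 hx2
    exact hdisj ⟨x, hx1, rfl⟩ ⟨x, hx2, rfl⟩
  have hnu_union : nu (F1 ∪ F2') ≤ a + b := by
    refine nu_le ?_
    intro G hG hpd
    have h1 : (G ∩ F1).card ≤ a := by
      refine le_trans (card_le_nu (Finset.inter_subset_right) ?_) hn1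
      exact hpd.subset (Finset.coe_subset.2 Finset.inter_subset_left)
    have h2 : (G \ F1).card ≤ b := by
      refine le_trans (card_le_nu ?_ ?_) hn2'
      · intro B hB
        obtain ⟨hBG, hBF1⟩ := Finset.mem_sdiff.1 hB
        rcases Finset.mem_union.1 (hG hBG) with h | h
        · exact absurd h hBF1
        · exact h
      · exact hpd.subset (Finset.coe_subset.2 Finset.sdiff_subset)
    calc G.card = (G ∩ F1).card + (G \ F1).card := (Finset.card_inter_add_card_sdiff G F1).symm
      _ ≤ a + b := by omega
  have hball : ∀ B ∈ F1 ∪ F2', IsBox (e+1) B := by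
    intro B hB
    rcases Finset.mem_union.1 hB with h | h
    · exact hb1 B h
    · exact hb2' B h
  have hnonempty : ∀ B ∈ F1 ∪ F2', (B : Set (Fin (e+1) → ℝ)).Nonempty := by
    intro B hB
    obtain ⟨l, u, hlu, rfl⟩ := hball B hB
    exact Set.nonempty_Icc.2 hlu
  obtain ⟨S, hSc, hSp⟩ := exists_tau_piercing hnonempty
  set S1 := S.filter (fun p => ∃ B ∈ F1, p ∈ B) with hS1
  set S2 := S.filter (fun p => ∃ B ∈ F2', p ∈ B) with hS2
  have hp1 : Piercing S1 F1 := by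
    intro B hB
    obtain ⟨p, hp, hpB⟩ := hSp B (Finset.mem_union_left _ hB)
    exact ⟨p, Finset.mem_filter.2 ⟨hp, B, hB, hpB⟩, hpB⟩
  have hp2 : Piercing S2 F2' := by
    intro B hB
    obtain ⟨p, hp, hpB⟩ := hSp B (Finset.mem_union_right _ hB)
    exact ⟨p, Finset.mem_filter.2 ⟨hp, B, hB, hpB⟩, hpB⟩
  have htau1 : tau F1 ≤ S1.card := tau_le_card hp1
  have htau2 : tau F2 ≤ S2.card := by
    refine le_trans (tau_le_card (S := S2.image (fun p => p + (-v))) ?_) Finset.card_image_le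
    intro B hB
    obtain ⟨p, hp, hpB⟩ := hp2 (Set.image T B) (Finset.mem_image_of_mem _ hB)
    obtain ⟨x, hx, rfl⟩ := hpB
    refine ⟨x, ?_, hx⟩
    refine Finset.mem_image.2 ⟨T x, hp, ?_⟩
    simp [hT]
  have hdisjS : Disjoint S1 S2 := by
    rw [Finset.disjoint_left]
    intro p hpS1 hpS2
    obtain ⟨-, B1, hB1, hpB1⟩ := Finset.mem_filter.1 hpS1
    obtain ⟨-, B2, hB2, hpB2⟩ := Finset.mem_filter.1 hpS2
    have h1 := hM1 B1 hB1 p hpB1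
    have h2 := hsep B2 hB2 p hpB2
    linarith
  have hcards : S1.card + S2.card ≤ S.card := by
    rw [← Finset.card_union_of_disjoint hdisjS]
    refine Finset.card_le_card ?_
    intro p hp
    rcases Finset.mem_union.1 hp with h | h
    · exact Finset.filter_subset _ _ h
    · exact Finset.filter_subset _ _ h
  calc fBox a (e+1) + fBox b (e+1) = tau F1 + tau F2 := by rw [ht1, ht2]
    _ ≤ S1.card + S2.card := by omega
    _ ≤ S.card := hcards
    _ = tau (F1 ∪ F2') := hSc
    _ ≤ fBox (a+b) (e+1) := tau_le_fBox hball hnu_union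

end Superadd

section Split

variable {e : ℕ}

noncomputable def uco (e : ℕ) (B : Set (Fin (e+1) → ℝ)) : ℝ := sSup (projLast e B)
noncomputable def lco (e : ℕ) (B : Set (Fin (e+1) → ℝ)) : ℝ := sInf (projLast e B)

lemma uco_box {l u : Fin (e+1) → ℝ} (h : l ≤ u) :
    uco e (Set.Icc l u) = u (Fin.last e) := by
  rw [uco, projLast, image_eval_Icc h, csSup_Icc (h (Fin.last e))]

lemma lco_box {l u : Fin (e+1) → ℝ} (h : l ≤ u) :
    lco e (Set.Icc l u) = l (Fin.last e) := by
  rw [lco, projLast, image_eval_Icc h, csInf_Icc (h (Fin.last e))]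

lemma lco_le_uco {B : Set (Fin (e+1) → ℝ)} (h : IsBox (e+1) B) : lco e B ≤ uco e B := by
  obtain ⟨l, u, hlu, rfl⟩ := h
  rw [uco_box hlu, lco_box hlu]
  exact hlu _

lemma mem_coord {B : Set (Fin (e+1) → ℝ)} (h : IsBox (e+1) B) {x : Fin (e+1) → ℝ}
    (hx : x ∈ B) : lco e B ≤ x (Fin.last e) ∧ x (Fin.last e) ≤ uco e B := by
  obtain ⟨l, u, hlu, rfl⟩ := h
  rw [uco_box hlu, lco_box hlu]
  exact ⟨hx.1 _, hx.2 _⟩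

lemma split_lemma (n k : ℕ) (hk1 : 1 ≤ k) (F : Finset (Set (Fin (e+1) → ℝ)))
    (hbox : ∀ B ∈ F, IsBox (e+1) B) (hnu : nu F ≤ n) :
    nu F ≤ k ∨
    ∃ (Flow Fcross Fhigh : Finset (Set (Fin (e+1) → ℝ))) (c : ℝ),
      Flow ⊆ F ∧ Fcross ⊆ F ∧ Fhigh ⊆ F ∧
      tau F ≤ tau Flow + tau Fcross + tau Fhigh ∧
      nu Flow ≤ k ∧ nu Fhigh ≤ n - k - 1 ∧ Crossing c Fcross := by
  classical
  set D := F.powerset.filter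
    (fun G : Finset (Set (Fin (e+1) → ℝ)) =>
      G.card = k + 1 ∧ (G : Set (Set (Fin (e+1) → ℝ))).PairwiseDisjoint id) with hD
  rcases D.eq_empty_or_nonempty with hDe | hDne
  · left
    refine nu_le ?_
    intro G hG hpd
    by_contra hcard
    push_neg at hcard
    obtain ⟨G', hG'sub, hG'card⟩ := G.exists_subset_card_eq (by omega : k + 1 ≤ G.card)
    have : G' ∈ D := Finset.mem_filter.2 ⟨Finset.mem_powerset.2 (hG'sub.trans hG),
      hG'card, hpd.subset (Finset.coe_subset.2 hG'sub)⟩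
    rw [hDe] at this
    exact absurd this (Finset.notMem_empty _)
  · right
    have hDspec : ∀ G ∈ D, G ⊆ F ∧ G.card = k + 1 ∧
        (G : Set (Set (Fin (e+1) → ℝ))).PairwiseDisjoint id := by
      intro G hG
      obtain ⟨h1, h2, h3⟩ := Finset.mem_filter.1 hG
      exact ⟨Finset.mem_powerset.1 h1, h2, h3⟩
    set w : Finset (Set (Fin (e+1) → ℝ)) → ℝ :=
      fun G => if h : G.Nonempty then G.sup' h (uco e) else 0 with hw
    obtain ⟨G0, hG0D, hG0min⟩ := D.exists_min_image w hDne
    obtain ⟨hG0F, hG0card, hG0pd⟩ := hDspec G0 hG0D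
    have hG0ne : G0.Nonempty := Finset.card_pos.1 (by omega)
    set c := w G0 with hc
    have hcval : c = G0.sup' hG0ne (uco e) := by rw [hc, hw]; simp [hG0ne]
    have hucoG0 : ∀ B ∈ G0, uco e B ≤ c := by
      intro B hB
      rw [hcval]
      exact Finset.le_sup' _ hB
    set Flow := F.filter (fun B => uco e B < c) with hFlow
    set Fcross := F.filter (fun B => lco e B ≤ c ∧ c ≤ uco e B) with hFcross
    set Fhigh := F.filter (fun B => c < lco e B) with hFhigh
    refine ⟨Flow, Fcross, Fhigh, c, Finset.filter_subset _ _, Finset.filter_subset _ _,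
      Finset.filter_subset _ _, ?_, ?_, ?_, ?_⟩
    · -- tau subadditivity over the cover
      have hne3 : ∀ (G : Finset (Set (Fin (e+1) → ℝ))), G ⊆ F →
          ∀ B ∈ G, (B : Set (Fin (e+1) → ℝ)).Nonempty := by
        intro G hG B hB
        obtain ⟨l, u, hlu, rfl⟩ := hbox B (hG hB)
        exact Set.nonempty_Icc.2 hlu
      obtain ⟨S1, hS1c, hS1p⟩ := exists_tau_piercing (hne3 Flow (Finset.filter_subset _ _))
      obtain ⟨S2, hS2c, hS2p⟩ := exists_tau_piercing (hne3 Fcross (Finset.filter_subset _ _))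
      obtain ⟨S3, hS3c, hS3p⟩ := exists_tau_piercing (hne3 Fhigh (Finset.filter_subset _ _))
      calc tau F ≤ (S1 ∪ S2 ∪ S3).card := by
            refine tau_le_card ?_
            intro B hB
            have hlu := lco_le_uco (hbox B hB)
            by_cases h1 : uco e B < c
            · obtain ⟨p, hp, hpB⟩ := hS1p B (Finset.mem_filter.2 ⟨hB, h1⟩)
              exact ⟨p, Finset.mem_union_left _ (Finset.mem_union_left _ hp), hpB⟩
            · by_cases h2 : c < lco e B
              · obtain ⟨p, hp, hpB⟩ := hS3p B (Finset.mem_filter.2 ⟨hB, h2⟩)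
                exact ⟨p, Finset.mem_union_right _ hp, hpB⟩
              · push_neg at h1 h2
                obtain ⟨p, hp, hpB⟩ := hS2p B (Finset.mem_filter.2 ⟨hB, h2, h1⟩)
                exact ⟨p, Finset.mem_union_left _ (Finset.mem_union_right _ hp), hpB⟩
        _ ≤ tau Flow + tau Fcross + tau Fhigh := by
            calc (S1 ∪ S2 ∪ S3).card ≤ (S1 ∪ S2).card + S3.card := Finset.card_union_le _ _
              _ ≤ S1.card + S2.card + S3.card := by
                  have := Finset.card_union_le S1 S2
                  omega
              _ = tau Flow + tau Fcross + tau Fhigh := by rw [hS1c, hS2c, hS3c]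
    · -- nu Flow ≤ k
      refine nu_le ?_
      intro G hG hpd
      by_contra hcard
      push_neg at hcard
      obtain ⟨G', hG'sub, hG'card⟩ := G.exists_subset_card_eq (by omega : k + 1 ≤ G.card)
      have hG'D : G' ∈ D := Finset.mem_filter.2
        ⟨Finset.mem_powerset.2 ((hG'sub.trans hG).trans (Finset.filter_subset _ _)),
        hG'card, hpd.subset (Finset.coe_subset.2 hG'sub)⟩
      have hG'ne : G'.Nonempty := Finset.card_pos.1 (by omega)
      have hlt : w G' < c := by
        rw [hw]
        simp only [hG'ne, dif_pos]
        rw [Finset.sup'_lt_iff]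
        intro B hB
        exact (Finset.mem_filter.1 (hG (hG'sub hB))).2
      exact absurd (hG0min G' hG'D) (not_le.2 hlt)
    · -- nu Fhigh ≤ n - k - 1
      refine nu_le ?_
      intro G hG hpd
      have hGF : G ⊆ F := hG.trans (Finset.filter_subset _ _)
      have hdisjGG0 : ∀ B0 ∈ G0, ∀ B ∈ G, Disjoint B0 B := by
        intro B0 hB0 B hB
        have h1 : uco e B0 ≤ c := hucoG0 B0 hB0
        have h2 : c < lco e B := (Finset.mem_filter.1 (hG hB)).2
        rw [Set.disjoint_left]
        intro x hx1 hx2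
        have hb0 := mem_coord (hbox B0 (hG0F hB0)) hx1
        have hb := mem_coord (hbox B (hGF hB)) hx2
        linarith [hb0.2, hb.1]
      have hGG0 : Disjoint G0 G := by
        rw [Finset.disjoint_left]
        intro B hBG0 hBG
        have h1 : uco e B ≤ c := hucoG0 B hBG0
        have h2 : c < lco e B := (Finset.mem_filter.1 (hG hBG)).2
        have := lco_le_uco (hbox B (hG0F hBG0))
        linarith
      have hcard : (G0 ∪ G).card ≤ nu F := by
        refine card_le_nu ?_ ?_
        · intro B hB
          rcases Finset.mem_union.1 hB with h | h
          · exact hG0F h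
          · exact hGF h
        · rw [Finset.coe_union, Set.pairwiseDisjoint_union]
          refine ⟨hG0pd, hpd, ?_⟩
          intro i hi j hj _
          exact hdisjGG0 i hi j hj
      rw [Finset.card_union_of_disjoint hGG0, hG0card] at hcard
      omega
    · -- Crossing
      intro B hB
      obtain ⟨hBF, hc1, hc2⟩ := Finset.mem_filter.1 hB
      obtain ⟨l, u, hlu, rfl⟩ := hbox B hBF
      rw [lco_box hlu] at hc1
      rw [uco_box hlu] at hc2
      exact ⟨l, u, hlu, rfl, hc1, hc2⟩

end Split

section Main

lemma main_bound (e : ℕ) (he : 1 ≤ e) :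
    ∀ n (F : Finset (Set (Fin (e+1) → ℝ))),
      (∀ B ∈ F, IsBox (e+1) B) → nu F ≤ n →
      (tau F : ℝ) ≤ n + Real.logb 2 n * fBox n e := by
  intro n
  induction n using Nat.strong_induction_on with
  | _ n ih =>
  intro F hbox hnu
  rcases Nat.lt_or_ge n 2 with hn2 | hn2
  · interval_cases n
    · -- n = 0
      have hF : F = ∅ := by
        rcases F.eq_empty_or_nonempty with h | ⟨B, hB⟩
        · exact h
        · exfalso
          have h1 : ({B} : Finset (Set (Fin (e+1) → ℝ))).card ≤ nu F :=
            card_le_nu (Finset.singleton_subset_iff.2 hB) (by simp)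
          simp only [Finset.card_singleton] at h1
          omega
      subst hF
      simp [tau_empty, Real.logb_zero]
    · -- n = 1
      have h1 : (tau F : ℝ) ≤ 1 := by exact_mod_cast helly_boxes hbox hnu
      simpa [Real.logb_one] using h1
  · -- n ≥ 2
    set k := n / 2 with hk
    have hk1 : 1 ≤ k := by omega
    have hkn : k < n := by omega
    set m := n - k - 1 with hm
    have hmk : m ≤ k := by omega
    have hmn : m < n := by omega
    -- real facts
    have hfn0 : (0:ℝ) ≤ (fBox n e : ℝ) := by positivity
    have hlogk0 : 0 ≤ Real.logb 2 (k : ℝ) :=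
      Real.logb_nonneg one_lt_two (by exact_mod_cast hk1)
    have hlogkn : Real.logb 2 (k : ℝ) + 1 ≤ Real.logb 2 (n : ℝ) := by
      have h2k : ((2 * k : ℕ) : ℝ) ≤ (n : ℝ) := by exact_mod_cast (by omega : 2 * k ≤ n)
      have hkpos : (0:ℝ) < (k : ℝ) := by exact_mod_cast hk1
      have h1 : Real.logb 2 ((2 * k : ℕ) : ℝ) ≤ Real.logb 2 (n : ℝ) :=
        Real.logb_le_logb_of_le one_lt_two (by positivity) h2k
      have h2 : Real.logb 2 ((2 * k : ℕ) : ℝ) = 1 + Real.logb 2 (k : ℝ) := by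
        push_cast
        rw [Real.logb_mul two_ne_zero (by positivity), Real.logb_self_eq_one one_lt_two]
      linarith
    have hlogn0 : 0 ≤ Real.logb 2 (n : ℝ) := by linarith
    obtain ⟨e', rfl⟩ : ∃ e', e = e' + 1 := ⟨e - 1, by omega⟩
    rcases split_lemma n k hk1 F hbox hnu with hcase |
      ⟨Flow, Fcross, Fhigh, c, hsub1, hsub2, hsub3, htau, hnul, hnuh, hcross⟩
    · -- degenerate: nu F ≤ k
      refine (ih k hkn F hbox hcase).trans ?_
      have hfk : (fBox k (e'+1) : ℝ) ≤ (fBox n (e'+1) : ℝ) := by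
        exact_mod_cast fBox_mono (e'+1) hkn.le
      have : Real.logb 2 (k : ℝ) * fBox k (e'+1) ≤ Real.logb 2 (n : ℝ) * fBox n (e'+1) := by
        refine mul_le_mul (by linarith) hfk (by positivity) hlogn0
      have hkn' : (k : ℝ) ≤ (n : ℝ) := by exact_mod_cast hkn.le
      linarith
    · -- main case
      have hIHlow := ih k hkn Flow (fun B hB => hbox B (hsub1 hB)) hnul
      have hIHhigh := ih m hmn Fhigh (fun B hB => hbox B (hsub3 hB)) hnuh
      have hcrossb : (tau Fcross : ℝ) ≤ (fBox n (e'+1) : ℝ) := by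
        have h1 : tau Fcross ≤ tau (Fcross.image (bslice c)) := tau_le_tau_bslice hcross
        have h2 : tau (Fcross.image (bslice c)) ≤ fBox n (e'+1) :=
          tau_le_fBox (bslice_isBox hcross)
            (le_trans (nu_bslice_le hcross) (le_trans (nu_mono hsub2) hnu))
        exact_mod_cast h1.trans h2
      have hsuper : (fBox k (e'+1) : ℝ) + (fBox m (e'+1) : ℝ) ≤ (fBox n (e'+1) : ℝ) := by
        have h1 : fBox k (e'+1) + fBox m (e'+1) ≤ fBox (k + m) (e'+1) := fBox_superadd k m e'
        have h2 : fBox (k + m) (e'+1) ≤ fBox n (e'+1) := fBox_mono (e'+1) (by omega)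
        exact_mod_cast h1.trans h2
      have hlogm : Real.logb 2 (m : ℝ) ≤ Real.logb 2 (k : ℝ) := by
        rcases Nat.eq_zero_or_pos m with hm0 | hm0
        · rw [hm0]; simpa [Real.logb_zero] using hlogk0
        · exact Real.logb_le_logb_of_le one_lt_two (by exact_mod_cast hm0)
            (by exact_mod_cast hmk)
      have hfk0 : (0:ℝ) ≤ (fBox k (e'+1) : ℝ) := by positivity
      have hfm0 : (0:ℝ) ≤ (fBox m (e'+1) : ℝ) := by positivity
      have htauR : (tau F : ℝ) ≤ (tau Flow : ℝ) + (tau Fcross : ℝ) + (tau Fhigh : ℝ) := by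
        exact_mod_cast htau
      have hkmcast : (k : ℝ) + (m : ℝ) = (n : ℝ) - 1 := by
        have heq : k + m = n - 1 := by omega
        have h1 : ((k + m : ℕ) : ℝ) = ((n - 1 : ℕ) : ℝ) := by rw [heq]
        push_cast [Nat.cast_sub (by omega : 1 ≤ n)] at h1
        linarith
      nlinarith [mul_nonneg (sub_nonneg.2 hlogm) hfm0,
        mul_nonneg (sub_nonneg.2 hlogkn) hfn0,
        mul_nonneg hlogk0 (sub_nonneg.2 hsuper)]

end Main

/-- Lemma 1: for n ≥ 1, d ≥ 2, f(n,d) ≤ n + log₂ n · f(n,d-1). -/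
theorem fBox_le_add_log_mul (n d : ℕ) (hn : 1 ≤ n) (hd : 2 ≤ d) :
    (fBox n d : ℝ) ≤ n + Real.logb 2 n * fBox n (d - 1) := by
  obtain ⟨e, rfl⟩ : ∃ e, d = e + 1 := ⟨d - 1, by omega⟩
  have he : 1 ≤ e := by omega
  obtain ⟨F, hbox, hnu, htau⟩ := exists_fBox_attained n (e+1)
  have := main_bound e he n F hbox hnu
  rw [htau] at this
  simpa using this
end

section
/- Let 𝓑 be a finite family of axis-parallel boxes in ℝ^d with ν(𝓑) = n ≥ 2, and for x ∈ ℝ let 𝓑⁻(x) be the boxes lying strictly left of the hyperplane x₁ = x and 𝓑⁺(x) those strictly right. Then for any 0 ≤ k ≤ n−2 there exists a ∈ ℝ such that ν(𝓑⁻(a)) ≤ k and ν(𝓑⁺(a)) ≤ n − k − 1. -/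
lemma nu_bdd {α : Type*} (F : Finset (Set α)) :
    BddAbove {n | ∃ G ⊆ F, G.card = n ∧ (G : Set (Set α)).PairwiseDisjoint id} := by
  refine ⟨F.card, fun n hn => ?_⟩
  obtain ⟨G, hG, hc, -⟩ := hn
  exact hc ▸ Finset.card_le_card hG

lemma nu_nonempty {α : Type*} (F : Finset (Set α)) :
    {n | ∃ G ⊆ F, G.card = n ∧ (G : Set (Set α)).PairwiseDisjoint id}.Nonempty :=
  ⟨0, ∅, by simp⟩

lemma le_nu {α : Type*} {F G : Finset (Set α)} (h : G ⊆ F)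
    (hd : (G : Set (Set α)).PairwiseDisjoint id) : G.card ≤ nu F :=
  le_csSup (nu_bdd F) ⟨G, h, rfl, hd⟩

lemma nu_mono_s14 {α : Type*} {F₁ F₂ : Finset (Set α)} (h : F₁ ⊆ F₂) : nu F₁ ≤ nu F₂ := by
  refine csSup_le (nu_nonempty F₁) ?_
  rintro n ⟨G, hG, rfl, hd⟩
  exact le_nu (hG.trans h) hd

lemma nu_le_card {α : Type*} (F : Finset (Set α)) : nu F ≤ F.card := by
  refine csSup_le (nu_nonempty F) ?_
  rintro n ⟨G, hG, rfl, -⟩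
  exact Finset.card_le_card hG

lemma nu_spec {α : Type*} (F : Finset (Set α)) :
    ∃ G ⊆ F, G.card = nu F ∧ (G : Set (Set α)).PairwiseDisjoint id :=
  Nat.sSup_mem (nu_nonempty F) (nu_bdd F)

lemma exists_disjoint_of_le_nu {α : Type*} {F : Finset (Set α)} {m : ℕ} (h : m ≤ nu F) :
    ∃ G ⊆ F, G.card = m ∧ (G : Set (Set α)).PairwiseDisjoint id := by
  obtain ⟨G, hG, hc, hd⟩ := nu_spec F
  obtain ⟨G', hG', hc'⟩ := Finset.exists_subset_card_eq (s := G) (n := m) (by omega)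
  exact ⟨G', hG'.trans hG, hc', hd.subset (Finset.coe_subset.2 hG')⟩

open scoped Classical in
/-- The sweeping argument: if ν(𝓑) = n ≥ 2 and 0 ≤ k ≤ n-2, there is a cut
a ∈ ℝ such that the boxes strictly left of the hyperplane x₀ = a have ν ≤ k
and those strictly right have ν ≤ n - k - 1. -/
theorem exists_sweep_cut (d : ℕ) (F : Finset (Set (Fin (d + 1) → ℝ)))
    (hF : ∀ B ∈ F, IsBox (d + 1) B) (n : ℕ) (hn : nu F = n) (hn2 : 2 ≤ n)
    (k : ℕ) (hk : k ≤ n - 2) :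
    ∃ a : ℝ,
      nu (F.filter (fun B => ∀ p ∈ B, p 0 < a)) ≤ k ∧
      nu (F.filter (fun B => ∀ p ∈ B, a < p 0)) ≤ n - k - 1 := by
  classical
  -- F is nonempty
  have hFne : F.Nonempty := by
    rcases F.eq_empty_or_nonempty with h | h
    · exfalso
      subst h
      have h0 := nu_le_card (∅ : Finset (Set (Fin (d + 1) → ℝ)))
      simp only [Finset.card_empty] at h0
      omega
    · exact h
  -- extract lower/upper corners
  have h' : ∀ B, B ∈ F → ∃ l u : Fin (d + 1) → ℝ, l ≤ u ∧ B = Set.Icc l u := hF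
  choose! lo hi hle hIcc using h'
  have hloMem : ∀ B ∈ F, lo B ∈ B := fun B hB => by
    have h : lo B ∈ Set.Icc (lo B) (hi B) := ⟨le_refl _, hle B hB⟩
    rwa [← hIcc B hB] at h
  have hhiMem : ∀ B ∈ F, hi B ∈ B := fun B hB => by
    have h : hi B ∈ Set.Icc (lo B) (hi B) := ⟨hle B hB, le_refl _⟩
    rwa [← hIcc B hB] at h
  have hub : ∀ B ∈ F, ∀ p ∈ B, p 0 ≤ hi B 0 := fun B hB p hp => by
    rw [hIcc B hB] at hp; exact hp.2 0
  have hlb : ∀ B ∈ F, ∀ p ∈ B, lo B 0 ≤ p 0 := fun B hB p hp => by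
    rw [hIcc B hB] at hp; exact hp.1 0
  set A : Set ℝ := {x | nu (F.filter (fun B => ∀ p ∈ B, p 0 < x)) ≤ k} with hA
  -- A is nonempty
  have hAne : A.Nonempty := by
    refine ⟨(F.image fun B => lo B 0).min' (hFne.image _), ?_⟩
    have : F.filter (fun B => ∀ p ∈ B, p 0 < (F.image fun B => lo B 0).min' (hFne.image _)) = ∅ := by
      refine Finset.filter_eq_empty_iff.2 ?_
      intro B hB hall
      have h1 := hall (lo B) (hloMem B hB)
      have h2 : (F.image fun B => lo B 0).min' (hFne.image _) ≤ lo B 0 :=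
        Finset.min'_le _ _ (Finset.mem_image_of_mem _ hB)
      linarith
    rw [hA, Set.mem_setOf_eq, this]
    have h0 := nu_le_card (∅ : Finset (Set (Fin (d + 1) → ℝ)))
    simp only [Finset.card_empty] at h0
    omega
  -- A is bounded above
  have hAbdd : BddAbove A := by
    refine ⟨(F.image fun B => hi B 0).max' (hFne.image _) + 1, fun x hx => ?_⟩
    by_contra hlt
    push_neg at hlt
    have hfull : F.filter (fun B => ∀ p ∈ B, p 0 < x) = F := by
      refine Finset.filter_true_of_mem ?_
      intro B hB p hp
      have h1 := hub B hB p hp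
      have h2 : hi B 0 ≤ (F.image fun B => hi B 0).max' (hFne.image _) :=
        Finset.le_max' _ (hi B 0) (Finset.mem_image_of_mem (fun B => hi B 0) hB)
      linarith
    have := hx
    rw [hA, Set.mem_setOf_eq, hfull, hn] at this
    omega
  set a : ℝ := sSup A with ha
  clear_value a
  refine ⟨a, ?_, ?_⟩
  · -- left part
    set Fa := F.filter (fun B => ∀ p ∈ B, p 0 < a) with hFa
    rcases Fa.eq_empty_or_nonempty with h | h
    · rw [h]
      have h0 := nu_le_card (∅ : Finset (Set (Fin (d + 1) → ℝ)))
      simp only [Finset.card_empty] at h0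
      omega
    · set m := (Fa.image fun B => hi B 0).max' (h.image _) with hm
      have hma : m < a := by
        obtain ⟨B, hB, hBm⟩ := Finset.mem_image.1 ((Fa.image fun B => hi B 0).max'_mem (h.image _))
        have hBF : B ∈ F := (Finset.mem_filter.1 hB).1
        have hcond := (Finset.mem_filter.1 hB).2
        have := hcond (hi B) (hhiMem B hBF)
        rw [hm, ← hBm]; exact this
      obtain ⟨x, hxA, hmx⟩ := exists_lt_of_lt_csSup hAne (show m < sSup A by rw [← ha]; exact hma)
      have hsub : Fa ⊆ F.filter (fun B => ∀ p ∈ B, p 0 < x) := by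
        intro B hB
        have hBF : B ∈ F := (Finset.mem_filter.1 hB).1
        refine Finset.mem_filter.2 ⟨hBF, fun p hp => ?_⟩
        have h1 := hub B hBF p hp
        have h2 : hi B 0 ≤ m := Finset.le_max' _ (hi B 0) (Finset.mem_image_of_mem (fun B => hi B 0) hB)
        linarith
      exact le_trans (nu_mono_s14 hsub) hxA
  · -- right part
    have harith : ∀ m : ℕ, n - k - 1 < m → n - k ≤ m := fun m h => by omega
    by_contra hcon
    push_neg at hcon
    have hge : n - k ≤ nu (F.filter (fun B => ∀ p ∈ B, a < p 0)) := harith _ hcon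
    obtain ⟨G, hG, hGcard, hGdisj⟩ := exists_disjoint_of_le_nu hge
    clear hcon hge
    have hGne : G.Nonempty := by
      rw [← Finset.card_pos, hGcard]; omega
    set m' := (G.image fun B => lo B 0).min' (hGne.image _) with hm'
    have ham' : a < m' := by
      obtain ⟨B, hB, hBm⟩ := Finset.mem_image.1 ((G.image fun B => lo B 0).min'_mem (hGne.image _))
      have hBf := Finset.mem_filter.1 (hG hB)
      have := hBf.2 (lo B) (hloMem B hBf.1)
      rw [hm', ← hBm]; exact this
    have hm'le : ∀ B ∈ G, m' ≤ lo B 0 := fun B hB =>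
      Finset.min'_le _ (lo B 0) (Finset.mem_image_of_mem (fun B => lo B 0) hB)
    set y : ℝ := (a + m') / 2 with hy
    clear_value y
    have hay : a < y := by rw [hy]; linarith
    have hym' : y < m' := by rw [hy]; linarith
    have hyA : y ∉ A := fun hyA => absurd (le_csSup hAbdd hyA) (by rw [← ha]; exact not_le.2 hay)
    have hyk : k + 1 ≤ nu (F.filter (fun B => ∀ p ∈ B, p 0 < y)) := by
      rw [hA, Set.mem_setOf_eq] at hyA
      exact Nat.succ_le_of_lt (Nat.lt_of_not_le hyA)
    obtain ⟨H, hH, hHcard, hHdisj⟩ := exists_disjoint_of_le_nu hyk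
    clear hyk hyA
    -- every point of a box in H has first coordinate < y
    have hHlt : ∀ B ∈ H, ∀ p ∈ B, p 0 < y := fun B hB => (Finset.mem_filter.1 (hH hB)).2
    -- every point of a box in G has first coordinate > y
    have hGgt : ∀ B ∈ G, ∀ p ∈ B, y < p 0 := by
      intro B hB p hp
      have hBF : B ∈ F := (Finset.mem_filter.1 (hG hB)).1
      have h1 := hlb B hBF p hp
      have h2 : m' ≤ lo B 0 := hm'le B hB
      linarith
    have hHG : Disjoint H G := by
      rw [Finset.disjoint_left]
      intro B hBH hBG
      have hBF : B ∈ F := (Finset.mem_filter.1 (hH hBH)).1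
      have h1 := hHlt B hBH (lo B) (hloMem B hBF)
      have h2 := hGgt B hBG (lo B) (hloMem B hBF)
      linarith
    have hUsub : H ∪ G ⊆ F := Finset.union_subset
      (hH.trans (Finset.filter_subset _ _)) (hG.trans (Finset.filter_subset _ _))
    have hUdisj : ((H ∪ G : Finset (Set (Fin (d + 1) → ℝ))) : Set (Set (Fin (d + 1) → ℝ))).PairwiseDisjoint id := by
      intro B hB C hC hne
      simp only [Finset.coe_union, Set.mem_union, Finset.mem_coe] at hB hC
      have cross : ∀ B' ∈ H, ∀ C' ∈ G, Disjoint (id B') (id C') := by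
        intro B' hB' C' hC'
        simp only [id]
        rw [Set.disjoint_left]
        intro p hpB hpC
        have := hHlt B' hB' p hpB
        have := hGgt C' hC' p hpC
        linarith
      rcases hB with hB | hB <;> rcases hC with hC | hC
      · exact hHdisj hB hC hne
      · exact cross B hB C hC
      · exact (cross C hC B hB).symm
      · exact hGdisj hB hC hne
    have hcard : (H ∪ G).card = n + 1 := by
      rw [Finset.card_union_of_disjoint hHG, hHcard, hGcard]
      omega
    have := le_nu hUsub hUdisj
    rw [hcard, hn] at this
    omega
end
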